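/- arXiv:1911.03315 — 3 statements merged into one kernel-verified Lean document; each statement's English description precedes it below -/
import Mathlib

section
/- Uniform continuity of the finite-horizon MPC cost: if the stage cost ℓ and terminal cost V_f satisfy ‖ℓ(x,u) − ℓ(z,u)‖ ≤ σ_ℓ(‖x−z‖) and ‖V_f(x) − V_f(z)‖ ≤ σ_{V_f}(‖x−z‖) for class-K functions σ_ℓ, σ_{V_f}, and the dynamics satisfy ‖F̂(x,u) − F̂(z,u)‖ ≤ σ_x(‖x−z‖) for a class-K function σ_x, then for any fixed input sequence u_0,…,u_{N-1} the cost V_N(x, u) = Σ_{i=0}^{N-1} ℓ(x̂_i, u_i) + V_f(x̂_N) (with x̂_0 = x, x̂_{i+1} = F̂(x̂_i,u_i)) satisfies |V_N(x,u) − V_N(z,u)| ≤ Σ_{i=0}^{N-1} σ_ℓ(σ_x^i(‖x−z‖)) + σ_{V_f}(σ_x^N(‖x−z‖)), and the right-hand side, as a function of ‖x−z‖, is a class-K function. -/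
/-- A class-K function: continuous, strictly increasing on `[0, ∞)`, vanishing at `0`. -/
def IsClassK (α : ℝ → ℝ) : Prop :=
  ContinuousOn α (Set.Ici 0) ∧ StrictMonoOn α (Set.Ici 0) ∧ α 0 = 0

lemma IsClassK.nonneg {α : ℝ → ℝ} (h : IsClassK α) {t : ℝ} (ht : 0 ≤ t) : 0 ≤ α t := by
  rcases eq_or_lt_of_le ht with rfl | ht'
  · exact le_of_eq h.2.2.symm
  · have := h.2.1 (Set.self_mem_Ici) (le_of_lt ht') ht'
    linarith [h.2.2]

lemma IsClassK.mapsTo {α : ℝ → ℝ} (h : IsClassK α) :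
    Set.MapsTo α (Set.Ici 0) (Set.Ici 0) := fun t ht => h.nonneg ht

lemma IsClassK.comp {α β : ℝ → ℝ} (hα : IsClassK α) (hβ : IsClassK β) :
    IsClassK (fun s => α (β s)) := by
  refine ⟨hα.1.comp hβ.1 hβ.mapsTo, ?_, by show α (β 0) = 0; rw [hβ.2.2, hα.2.2]⟩
  exact hα.2.1.comp hβ.2.1 hβ.mapsTo

lemma IsClassK.add {α β : ℝ → ℝ} (hα : IsClassK α) (hβ : IsClassK β) :
    IsClassK (fun s => α s + β s) := by
  refine ⟨hα.1.add hβ.1, ?_, by show α 0 + β 0 = 0; rw [hα.2.2, hβ.2.2, add_zero]⟩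
  intro a ha b hb hab
  exact add_lt_add (hα.2.1 ha hb hab) (hβ.2.1 ha hb hab)

lemma IsClassK.iterate {α : ℝ → ℝ} (h : IsClassK α) : ∀ i, IsClassK (α^[i]) := by
  intro i
  induction i with
  | zero => exact ⟨continuousOn_id, strictMonoOn_id, rfl⟩
  | succ k ih =>
    have : α^[k + 1] = fun s => α (α^[k] s) := by
      funext s; rw [Function.iterate_succ_apply']
    rw [this]
    exact h.comp ih

lemma classK_cost (σl σVf σx : ℝ → ℝ) (hσl : IsClassK σl) (hσVf : IsClassK σVf)
    (hσx : IsClassK σx) :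
    ∀ N, IsClassK (fun s => (∑ i ∈ Finset.range N, σl (σx^[i] s)) + σVf (σx^[N] s)) := by
  intro N
  induction N with
  | zero =>
    have : (fun s => (∑ i ∈ Finset.range 0, σl (σx^[i] s)) + σVf (σx^[0] s)) = σVf := by
      funext s; simp
    rw [this]; exact hσVf
  | succ k ih =>
    have heq : (fun s => (∑ i ∈ Finset.range (k + 1), σl (σx^[i] s)) + σVf (σx^[k + 1] s)) =
        fun s => σl s +
          ((∑ i ∈ Finset.range k, σl (σx^[i] (σx s))) + σVf (σx^[k] (σx s))) := by
      funext s
      rw [Finset.sum_range_succ']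
      simp [Function.iterate_succ_apply]
      ring
    rw [heq]
    exact hσl.add (ih.comp hσx)

/-- Uniform continuity of the finite-horizon MPC cost: if stage cost, terminal cost and
dynamics are uniformly continuous in the state with class-K moduli, then the horizon-`N`
cost difference is bounded by `Σ σℓ(σx^[i]‖x−z‖) + σVf(σx^[N]‖x−z‖)`, and this bound is
itself a class-K function of `‖x−z‖`. -/
theorem cost_uniform_continuity {n : ℕ} {U : Type*}
    (F : EuclideanSpace ℝ (Fin n) → U → EuclideanSpace ℝ (Fin n))
    (ℓ : EuclideanSpace ℝ (Fin n) → U → ℝ) (Vf : EuclideanSpace ℝ (Fin n) → ℝ)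
    (σl σVf σx : ℝ → ℝ)
    (hσl : IsClassK σl) (hσVf : IsClassK σVf) (hσx : IsClassK σx)
    (hl : ∀ a b u, |ℓ a u - ℓ b u| ≤ σl ‖a - b‖)
    (hVf : ∀ a b, |Vf a - Vf b| ≤ σVf ‖a - b‖)
    (hF : ∀ a b u, ‖F a u - F b u‖ ≤ σx ‖a - b‖)
    (N : ℕ) (u : ℕ → U) (x z : EuclideanSpace ℝ (Fin n))
    (xh zh : ℕ → EuclideanSpace ℝ (Fin n))
    (hx0 : xh 0 = x) (hz0 : zh 0 = z)
    (hxs : ∀ i, xh (i + 1) = F (xh i) (u i))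
    (hzs : ∀ i, zh (i + 1) = F (zh i) (u i)) :
    |((∑ i ∈ Finset.range N, ℓ (xh i) (u i)) + Vf (xh N)) -
        ((∑ i ∈ Finset.range N, ℓ (zh i) (u i)) + Vf (zh N))| ≤
      (∑ i ∈ Finset.range N, σl (σx^[i] ‖x - z‖)) + σVf (σx^[N] ‖x - z‖) ∧
    IsClassK (fun s => (∑ i ∈ Finset.range N, σl (σx^[i] s)) + σVf (σx^[N] s)) := by
  set d := ‖x - z‖ with hd
  have hd0 : (0 : ℝ) ≤ d := norm_nonneg _
  have hiter_nn : ∀ i, 0 ≤ σx^[i] d := fun i => (hσx.iterate i).nonneg hd0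
  have key : ∀ i, ‖xh i - zh i‖ ≤ σx^[i] d := by
    intro i
    induction i with
    | zero => simp [hx0, hz0, hd]
    | succ k ih =>
      rw [hxs, hzs, Function.iterate_succ_apply']
      calc ‖F (xh k) (u k) - F (zh k) (u k)‖ ≤ σx ‖xh k - zh k‖ := hF _ _ _
        _ ≤ σx (σx^[k] d) :=
          hσx.2.1.monotoneOn (norm_nonneg _) (hiter_nn k) ih
  constructor
  · have hstage : ∀ i, |ℓ (xh i) (u i) - ℓ (zh i) (u i)| ≤ σl (σx^[i] d) := by
      intro i
      calc |ℓ (xh i) (u i) - ℓ (zh i) (u i)| ≤ σl ‖xh i - zh i‖ := hl _ _ _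
        _ ≤ σl (σx^[i] d) :=
          hσl.2.1.monotoneOn (norm_nonneg _) (hiter_nn i) (key i)
    have hterm : |Vf (xh N) - Vf (zh N)| ≤ σVf (σx^[N] d) := by
      calc |Vf (xh N) - Vf (zh N)| ≤ σVf ‖xh N - zh N‖ := hVf _ _
        _ ≤ σVf (σx^[N] d) :=
          hσVf.2.1.monotoneOn (norm_nonneg _) (hiter_nn N) (key N)
    have hsum : |(∑ i ∈ Finset.range N, ℓ (xh i) (u i)) -
        (∑ i ∈ Finset.range N, ℓ (zh i) (u i))| ≤
        ∑ i ∈ Finset.range N, σl (σx^[i] d) := by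
      rw [← Finset.sum_sub_distrib]
      exact (Finset.abs_sum_le_sum_abs _ _).trans
        (Finset.sum_le_sum fun i _ => hstage i)
    calc |((∑ i ∈ Finset.range N, ℓ (xh i) (u i)) + Vf (xh N)) -
        ((∑ i ∈ Finset.range N, ℓ (zh i) (u i)) + Vf (zh N))|
        = |((∑ i ∈ Finset.range N, ℓ (xh i) (u i)) -
            (∑ i ∈ Finset.range N, ℓ (zh i) (u i))) + (Vf (xh N) - Vf (zh N))| := by
          ring_nf
      _ ≤ _ + _ := abs_add_le _ _
      _ ≤ _ := add_le_add hsum hterm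
  · exact classK_cost σl σVf σx hσl hσVf hσx N
end

section
/- Cholesky update under bordering: let K = Rᵀ R be the Cholesky decomposition of a symmetric positive definite matrix K written in 2×2 block form with blocks K11, K13; K13ᵀ, K33, and let the enlarged symmetric positive definite matrix K' have 3×3 block form with new middle row/column blocks K12, K22, K23. Then the upper triangular matrix S with blocks S11 = R11, S12 = R11⁻ᵀ K12, S13 = R13, S22 = chol(K22 − S12ᵀ S12), S23 = S22⁻ᵀ (K23 − S12ᵀ S13), S33 = chol(R33ᵀ R33 − S23ᵀ S23) satisfies Sᵀ S = K'. -/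
open Matrix

/-- Cholesky update under bordering: inserting a middle block row/column.  Given the
Cholesky factorisation `K = Rᵀ R` of the original 2×2 block matrix, and blocks `S`
defined by the update formulas (expressed as their defining equations), the assembled
upper block-triangular matrix `S` satisfies `Sᵀ S = K'`. -/
theorem cholesky_update
    {a b c : Type*} [Fintype a] [Fintype b] [Fintype c]
    [DecidableEq a] [DecidableEq b] [DecidableEq c]
    (K11 : Matrix a a ℝ) (K12 : Matrix a b ℝ) (K13 : Matrix a c ℝ)
    (K22 : Matrix b b ℝ) (K23 : Matrix b c ℝ) (K33 : Matrix c c ℝ)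
    (R11 : Matrix a a ℝ) (R13 : Matrix a c ℝ) (R33 : Matrix c c ℝ)
    (S11 : Matrix a a ℝ) (S12 : Matrix a b ℝ) (S13 : Matrix a c ℝ)
    (S22 : Matrix b b ℝ) (S23 : Matrix b c ℝ) (S33 : Matrix c c ℝ)
    -- K is positive definite with Cholesky factor R
    (hK : (Matrix.fromBlocks K11 K13 K13ᵀ K33).PosDef)
    (hchol : Matrix.fromBlocks K11 K13 K13ᵀ K33 =
      (Matrix.fromBlocks R11 R13 0 R33)ᵀ * Matrix.fromBlocks R11 R13 0 R33)
    -- the enlarged matrix is positive definite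
    (hK' : (Matrix.fromBlocks (Matrix.fromBlocks K11 K12 K12ᵀ K22)
      (Matrix.fromRows K13 K23) (Matrix.fromCols K13ᵀ K23ᵀ) K33).PosDef)
    -- defining equations of the updated Cholesky blocks
    (hS11 : S11 = R11)
    (hS12 : R11ᵀ * S12 = K12)
    (hS13 : S13 = R13)
    (hS22 : S22ᵀ * S22 = K22 - S12ᵀ * S12)
    (hS23 : S22ᵀ * S23 = K23 - S12ᵀ * S13)
    (hS33 : S33ᵀ * S33 = R33ᵀ * R33 - S23ᵀ * S23) :
    (Matrix.fromBlocks (Matrix.fromBlocks S11 S12 0 S22)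
        (Matrix.fromRows S13 S23) 0 S33)ᵀ *
      Matrix.fromBlocks (Matrix.fromBlocks S11 S12 0 S22)
        (Matrix.fromRows S13 S23) 0 S33 =
    Matrix.fromBlocks (Matrix.fromBlocks K11 K12 K12ᵀ K22)
      (Matrix.fromRows K13 K23) (Matrix.fromCols K13ᵀ K23ᵀ) K33 := by
  rw [Matrix.fromBlocks_transpose, Matrix.fromBlocks_multiply] at hchol
  have h11 : K11 = R11ᵀ * R11 := by
    have := congrArg Matrix.toBlocks₁₁ hchol; simpa using this
  have h13 : K13 = R11ᵀ * R13 := by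
    have := congrArg Matrix.toBlocks₁₂ hchol; simpa using this
  have h33 : K33 = R13ᵀ * R13 + R33ᵀ * R33 := by
    have := congrArg Matrix.toBlocks₂₂ hchol; simpa using this
  subst hS11 hS13
  rw [Matrix.fromBlocks_transpose, Matrix.transpose_fromRows, Matrix.fromBlocks_multiply,
      Matrix.fromBlocks_transpose, Matrix.fromBlocks_multiply,
      Matrix.fromBlocks_mul_fromRows, Matrix.fromCols_mul_fromBlocks,
      Matrix.fromCols_mul_fromRows]
  simp only [Matrix.transpose_zero, Matrix.zero_mul, Matrix.mul_zero, add_zero, zero_add]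
  have hS12T : S12ᵀ * S11 = K12ᵀ := by
    simpa using congrArg Matrix.transpose hS12
  have hS23T : S23ᵀ * S22 = K23ᵀ - S13ᵀ * S12 := by
    have := congrArg Matrix.transpose hS23
    simpa [Matrix.transpose_sub] using this
  rw [Matrix.fromBlocks_inj, Matrix.fromBlocks_inj]
  refine ⟨⟨h11.symm, hS12, hS12T, by rw [hS22, add_sub_cancel]⟩, ?_, ?_, by rw [hS33, h33]; abel⟩
  · rw [show K13.fromRows K23 = Matrix.fromRows (S11ᵀ * S13) (K23) by rw [h13]]
    congr 1
    rw [hS23, add_sub_cancel]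
  · rw [show K13ᵀ.fromCols K23ᵀ = Matrix.fromCols (S13ᵀ * S11) (K23ᵀ) by
      rw [h13]; simp [Matrix.transpose_mul]]
    congr 1
    rw [hS23T, add_sub_cancel]
end

section
/- Cholesky downdate under row/column deletion: let K be symmetric positive definite in 3×3 block form with upper-triangular Cholesky factor R having blocks R11, R12, R13; 0, R22, R23; 0, 0, R33. Then the matrix S with blocks S11 = R11, S13 = R13, S33 = chol(R23ᵀ R23 + R33ᵀ R33) is an upper-triangular Cholesky factor of the submatrix obtained from K by deleting the middle block row and column, i.e., Sᵀ S equals the 2×2 block matrix [K11, K13; K13ᵀ, K33]. -/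
open Matrix

/-- Cholesky downdate under deletion of the middle block row/column: if `K = Rᵀ R` with
`R` upper block triangular, then `S = [R11, R13; 0, S33]` with
`S33ᵀ S33 = R23ᵀ R23 + R33ᵀ R33` satisfies `Sᵀ S = [K11, K13; K13ᵀ, K33]`. -/
theorem cholesky_downdate
    {a b c : Type*} [Fintype a] [Fintype b] [Fintype c]
    [DecidableEq a] [DecidableEq b] [DecidableEq c]
    (K11 : Matrix a a ℝ) (K12 : Matrix a b ℝ) (K13 : Matrix a c ℝ)
    (K22 : Matrix b b ℝ) (K23 : Matrix b c ℝ) (K33 : Matrix c c ℝ)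
    (R11 : Matrix a a ℝ) (R12 : Matrix a b ℝ) (R13 : Matrix a c ℝ)
    (R22 : Matrix b b ℝ) (R23 : Matrix b c ℝ) (R33 : Matrix c c ℝ)
    (S33 : Matrix c c ℝ)
    -- K is positive definite with Cholesky factor R
    (hK : (Matrix.fromBlocks (Matrix.fromBlocks K11 K12 K12ᵀ K22)
      (Matrix.fromRows K13 K23) (Matrix.fromCols K13ᵀ K23ᵀ) K33).PosDef)
    (hchol : Matrix.fromBlocks (Matrix.fromBlocks K11 K12 K12ᵀ K22)
        (Matrix.fromRows K13 K23) (Matrix.fromCols K13ᵀ K23ᵀ) K33 =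
      (Matrix.fromBlocks (Matrix.fromBlocks R11 R12 0 R22)
          (Matrix.fromRows R13 R23) 0 R33)ᵀ *
        Matrix.fromBlocks (Matrix.fromBlocks R11 R12 0 R22)
          (Matrix.fromRows R13 R23) 0 R33)
    -- defining equation of the downdated bottom-right Cholesky block
    (hS33 : S33ᵀ * S33 = R23ᵀ * R23 + R33ᵀ * R33) :
    (Matrix.fromBlocks R11 R13 0 S33)ᵀ * Matrix.fromBlocks R11 R13 0 S33 =
      Matrix.fromBlocks K11 K13 K13ᵀ K33 := by
  simp only [Matrix.fromBlocks_transpose, Matrix.transpose_fromRows,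
    Matrix.transpose_fromCols, Matrix.fromBlocks_multiply, Matrix.transpose_zero,
    Matrix.zero_mul, Matrix.mul_zero, add_zero, zero_add,
    Matrix.fromBlocks_inj, Matrix.fromRows_ext_iff, Matrix.fromCols_ext_iff,
    Matrix.fromRows_mul, Matrix.mul_fromCols, Matrix.fromCols_mul_fromBlocks,
    Matrix.fromBlocks_mul_fromRows, Matrix.fromCols_mul_fromRows] at hchol ⊢
  obtain ⟨⟨h11, -, -, -⟩, ⟨h13, h23⟩, -, h33⟩ := hchol
  refine ⟨h11.symm ▸ rfl, h13.symm ▸ rfl, ?_, ?_⟩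
  · rw [h13]; simp [Matrix.transpose_mul]
  · rw [hS33, h33, add_assoc]
end
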